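/- arXiv:2002.04063 — 6 statements merged into one kernel-verified Lean document; each statement's English description precedes it below -/
import Mathlib

section
/- Let a > 0, c ≥ 1, θ ∈ (0,1], and k ≥ 1 an integer. Suppose a sequence (a_i)_{i=0}^k of reals satisfies a_0 = 0 and a_i ≥ a_{i-1} + (a^θ/(k c)) · (a - a_{i-1})^{1-θ} for all i ∈ [k], with a_i ≤ a. Then a_k ≥ a · [1 - (1 - θ/c)^{1/θ}]. -/
/-- Solving the recurrence arising in the greedy analysis for `(c,θ)`-monotonic sharp
functions: if `a 0 = 0`, `a i ≤ A` for `i ≤ k`, and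
`a i ≥ a (i-1) + (A^θ/(k c)) (A - a (i-1))^(1-θ)` for `1 ≤ i ≤ k`, then
`a k ≥ A (1 - (1 - θ/c)^(1/θ))`. -/
theorem greedy_recurrence (A c θ : ℝ) (k : ℕ) (hA : 0 < A) (hc : 1 ≤ c)
    (hθ0 : 0 < θ) (hθ1 : θ ≤ 1) (hk : 1 ≤ k)
    (a : ℕ → ℝ) (h0 : a 0 = 0) (hle : ∀ i ≤ k, a i ≤ A)
    (hrec : ∀ i, 1 ≤ i → i ≤ k →
      a i ≥ a (i - 1) + (A ^ θ / (k * c)) * (A - a (i - 1)) ^ (1 - θ)) :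
    a k ≥ A * (1 - (1 - θ / c) ^ (1 / θ)) := by
  have hk0 : (0:ℝ) < (k:ℝ) := by exact_mod_cast Nat.lt_of_lt_of_le Nat.zero_lt_one hk
  have hc0 : (0:ℝ) < c := lt_of_lt_of_le one_pos hc
  have hkc : (0:ℝ) < (k:ℝ) * c := mul_pos hk0 hc0
  have hAθ : (0:ℝ) < A ^ θ := Real.rpow_pos_of_pos hA θ
  set δ : ℝ := A ^ θ / ((k:ℝ) * c) with hδdef
  have hδ0 : 0 < δ := div_pos hAθ hkc
  have hθc : θ / c ≤ 1 := by
    rw [div_le_one hc0]; exact hθ1.trans hc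
  -- main induction
  have main : ∀ i, i ≤ k → (A - a i) ^ θ ≤ A ^ θ * (1 - (i:ℝ) * θ / ((k:ℝ) * c)) := by
    intro i
    induction i with
    | zero =>
      intro _
      simp [h0]
    | succ n ih =>
      intro hi
      have hn : n ≤ k := le_of_lt (Nat.lt_of_succ_le hi)
      have IH := ih hn
      set x : ℝ := A - a n with hxdef
      have hx0 : 0 ≤ x := sub_nonneg.mpr (hle n hn)
      have hy0 : 0 ≤ A - a (n + 1) := sub_nonneg.mpr (hle (n + 1) hi)
      have hrec' := hrec (n + 1) (Nat.le_add_left 1 n) hi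
      simp only [Nat.add_sub_cancel] at hrec'
      have hkey : A - a (n + 1) ≤ x - δ * x ^ (1 - θ) := by
        have : a n + δ * x ^ (1 - θ) ≤ a (n + 1) := hrec'
        linarith
      have hRHS0 : 0 ≤ A ^ θ * (1 - ((n:ℝ) + 1) * θ / ((k:ℝ) * c)) := by
        apply mul_nonneg hAθ.le
        have hcast : ((n:ℝ) + 1) ≤ (k:ℝ) := by exact_mod_cast hi
        have h1 : ((n:ℝ) + 1) * θ / ((k:ℝ) * c) ≤ (k:ℝ) * θ / ((k:ℝ) * c) := by
          gcongr
        have h2 : (k:ℝ) * θ / ((k:ℝ) * c) = θ / c := by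
          field_simp
        nlinarith [hθc]
      rcases eq_or_lt_of_le hx0 with hx | hx
      · -- x = 0 case
        have hxz : x = 0 := hx.symm
        have hpow : (0:ℝ) ≤ δ * x ^ (1 - θ) := by positivity
        have hyz : A - a (n + 1) = 0 := le_antisymm (by nlinarith) hy0
        rw [hyz, Real.zero_rpow (ne_of_gt hθ0)]
        push_cast
        exact hRHS0
      · -- x > 0 case
        have hz0 : 0 ≤ x - δ * x ^ (1 - θ) := le_trans hy0 hkey
        -- tangent line inequality: (x - δ x^{1-θ})^θ ≤ x^θ - θ δ
        have h2' : x * x ^ (-θ) = x ^ (1 - θ) := by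
          nth_rewrite 1 [← Real.rpow_one x]
          rw [← Real.rpow_add hx]
          ring_nf
        have hs : -1 ≤ -(δ * x ^ (-θ)) := by
          have h3 : δ * x ^ (-θ) ≤ 1 := by
            rw [← mul_le_mul_iff_right₀ hx, mul_one, ← mul_assoc, mul_comm x δ, mul_assoc, h2']
            linarith
          linarith
        have hbern := rpow_one_add_le_one_add_mul_self hs hθ0.le hθ1
        have hfact : x - δ * x ^ (1 - θ) = x * (1 + -(δ * x ^ (-θ))) := by
          linear_combination δ * h2'
        have htan : (x - δ * x ^ (1 - θ)) ^ θ ≤ x ^ θ - θ * δ := by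
          rw [hfact, Real.mul_rpow hx.le (by linarith)]
          have hxθδ : x ^ θ * (x ^ (-θ) * δ) = δ := by
            rw [← mul_assoc, ← Real.rpow_add hx]
            simp
          calc x ^ θ * (1 + -(δ * x ^ (-θ))) ^ θ
              ≤ x ^ θ * (1 + θ * -(δ * x ^ (-θ))) := by
                apply mul_le_mul_of_nonneg_left hbern (Real.rpow_nonneg hx.le θ)
            _ = x ^ θ - θ * δ := by
                rw [mul_add, mul_one]
                rw [show θ * -(δ * x ^ (-θ)) = -(θ * (x ^ (-θ) * δ)) by ring]
                rw [mul_neg, ← mul_assoc, mul_comm (x ^ θ) θ, mul_assoc, hxθδ]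
                ring
        have hmono : (A - a (n + 1)) ^ θ ≤ (x - δ * x ^ (1 - θ)) ^ θ :=
          Real.rpow_le_rpow hy0 hkey hθ0.le
        calc (A - a (n + 1)) ^ θ ≤ x ^ θ - θ * δ := le_trans hmono htan
          _ ≤ A ^ θ * (1 - (n:ℝ) * θ / ((k:ℝ) * c)) - θ * δ := by linarith
          _ = A ^ θ * (1 - (((n:ℕ) + 1 : ℕ):ℝ) * θ / ((k:ℝ) * c)) := by
              rw [hδdef]
              push_cast
              field_simp
              ring
  -- conclude
  have hfin := main k le_rfl
  have hkk : (k:ℝ) * θ / ((k:ℝ) * c) = θ / c := by field_simp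
  rw [hkk] at hfin
  have h1θc : 0 ≤ 1 - θ / c := by linarith
  have hyk : 0 ≤ A - a k := sub_nonneg.mpr (hle k le_rfl)
  have hraise : ((A - a k) ^ θ) ^ (1 / θ) ≤ (A ^ θ * (1 - θ / c)) ^ (1 / θ) :=
    Real.rpow_le_rpow (Real.rpow_nonneg hyk θ) hfin (by positivity)
  have hL : ((A - a k) ^ θ) ^ (1 / θ) = A - a k := by
    rw [← Real.rpow_mul hyk, mul_one_div, div_self (ne_of_gt hθ0), Real.rpow_one]
  have hR : (A ^ θ * (1 - θ / c)) ^ (1 / θ) = A * (1 - θ / c) ^ (1 / θ) := by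
    rw [Real.mul_rpow hAθ.le h1θc, ← Real.rpow_mul hA.le, mul_one_div,
      div_self (ne_of_gt hθ0), Real.rpow_one]
  rw [hL, hR] at hraise
  nlinarith [hraise]
end

section
/- Let f : 2^V → ℝ≥0 be monotone and submodular, and S* optimal for max{f(S):|S|≤k}. If f is (c,θ)-monotonic sharp, i.e., Σ_{e∈S*\S} f_S(e) ≥ (|S*\S|/(kc))^{1/θ}·f(S*) for all |S| ≤ k, then f is (c,θ)-submodular sharp: max_{e∈S*\S} f_S(e) ≥ (1/(kc))·(f(S*)-f(S))^{1-θ}·f(S*)^θ for all |S| ≤ k with f(S) ≤ f(S*). -/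
lemma sum_marginals_aux {V : Type*} [DecidableEq V] (f : Finset V → ℝ)
    (hsub : ∀ (A B : Finset V) (e : V), A ⊆ B → e ∉ B →
      f (insert e B) - f B ≤ f (insert e A) - f A)
    (S : Finset V) :
    ∀ T : Finset V, Disjoint S T →
      f (S ∪ T) - f S ≤ ∑ e ∈ T, (f (insert e S) - f S) := by
  intro T
  induction T using Finset.induction_on with
  | empty => simp
  | insert a T' ha ih =>
    intro hdisj
    have haS : a ∉ S := fun h => (Finset.disjoint_left.mp hdisj h) (Finset.mem_insert_self a T')
    have hd' : Disjoint S T' := hdisj.mono_right (Finset.subset_insert a T')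
    have haST : a ∉ S ∪ T' := by
      simp only [Finset.mem_union, not_or]
      exact ⟨haS, ha⟩
    have h1 := hsub S (S ∪ T') a Finset.subset_union_left haST
    have h2 := ih hd'
    rw [Finset.sum_insert ha]
    have : S ∪ insert a T' = insert a (S ∪ T') := by
      ext x; simp [Finset.mem_union, Finset.mem_insert]
    rw [this]
    linarith

/-- Monotonic sharpness implies submodular sharpness: if a monotone submodular
nonnegative `f` with optimal `S*` is `(c,θ)`-monotonic sharp, then for every feasible
`S` with `f S ≤ f S*` and `S* \ S` nonempty there is `e ∈ S* \ S` with
`f_S(e) ≥ (1/(kc)) (f S* - f S)^{1-θ} (f S*)^θ`. -/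
theorem monotonic_sharp_implies_submodular_sharp {V : Type*} [DecidableEq V]
    (f : Finset V → ℝ) (k : ℕ) (hk : 1 ≤ k)
    (c θ : ℝ) (hc : 1 ≤ c) (hθ0 : 0 < θ) (hθ1 : θ ≤ 1)
    (hnn : ∀ S : Finset V, 0 ≤ f S)
    (hmono : ∀ A B : Finset V, A ⊆ B → f A ≤ f B)
    (hsub : ∀ (A B : Finset V) (e : V), A ⊆ B → e ∉ B →
      f (insert e B) - f B ≤ f (insert e A) - f A)
    (Sstar : Finset V) (hSk : Sstar.card ≤ k)
    (hopt : ∀ S : Finset V, S.card ≤ k → f S ≤ f Sstar)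
    (hsharp : ∀ S : Finset V, S.card ≤ k →
      ∑ e ∈ Sstar \ S, (f (insert e S) - f S) ≥
        (((Sstar \ S).card : ℝ) / (k * c)) ^ (1 / θ) * f Sstar) :
    ∀ S : Finset V, S.card ≤ k → f S ≤ f Sstar → (Sstar \ S).Nonempty →
      ∃ e ∈ Sstar \ S, f (insert e S) - f S ≥
        (1 / (k * c)) * (f Sstar - f S) ^ (1 - θ) * f Sstar ^ θ := by
  intro S hS hfS hne
  set T := Sstar \ S with hT
  set Ssum := ∑ e ∈ T, (f (insert e S) - f S) with hSsum
  set F := f Sstar with hF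
  have hkc : (0:ℝ) < k * c := by positivity
  have hm1 : (1:ℝ) ≤ (T.card : ℝ) := by
    exact_mod_cast Nat.one_le_iff_ne_zero.mpr (Finset.card_ne_zero_of_mem hne.choose_spec)
  have hm0 : (0:ℝ) < (T.card : ℝ) := lt_of_lt_of_le one_pos hm1
  have hF0 : (0:ℝ) ≤ F := hnn Sstar
  -- Ssum ≥ F - f S
  have hdisj : Disjoint S T := Finset.disjoint_sdiff
  have hsum1 := sum_marginals_aux f hsub S T hdisj
  have hSTsup : Sstar ⊆ S ∪ T := by
    intro x hx
    by_cases hxS : x ∈ S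
    · exact Finset.mem_union_left _ hxS
    · exact Finset.mem_union_right _ (Finset.mem_sdiff.mpr ⟨hx, hxS⟩)
  have hSsF : F - f S ≤ Ssum := le_trans (by linarith [hmono Sstar (S ∪ T) hSTsup]) hsum1
  have hSs0 : 0 ≤ Ssum := le_trans (by linarith) hSsF
  have hsh := hsharp S hS
  -- max element
  have hmax : ∃ e ∈ T, Ssum / T.card ≤ f (insert e S) - f S := by
    apply Finset.exists_le_of_sum_le hne
    rw [Finset.sum_const]
    rw [nsmul_eq_mul]
    rw [mul_div_cancel₀ _ (ne_of_gt hm0)]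
  obtain ⟨e, heT, hege⟩ := hmax
  refine ⟨e, heT, ?_⟩
  -- suffices: RHS ≤ Ssum/m
  have key : (1 / (k * c)) * (F - f S) ^ (1 - θ) * F ^ θ ≤ Ssum / T.card := by
    rcases eq_or_lt_of_le hSs0 with hSsumz | hSsp
    · -- Ssum = 0 case: F = 0
      have hbase : (0:ℝ) < ((T.card : ℝ) / (k * c)) := by positivity
      have hpow : (0:ℝ) < ((T.card : ℝ) / (k * c)) ^ (1/θ) :=
        Real.rpow_pos_of_pos hbase _
      have hFz : F = 0 := by
        by_contra h
        have hFp : 0 < F := lt_of_le_of_ne hF0 (Ne.symm h)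
        nlinarith [hsh, hSsumz.symm]
      have hfSz : f S = 0 := le_antisymm (by rw [← hFz]; exact hfS) (hnn S)
      rw [hFz, hfSz]
      simp only [sub_zero]
      rw [Real.zero_rpow (ne_of_gt hθ0)]
      rw [mul_zero]
      exact div_nonneg hSs0 hm0.le
    · -- Ssum > 0
      have h1 : ((T.card : ℝ) / (k * c)) * F ^ θ ≤ Ssum ^ θ := by
        have hb : (0:ℝ) ≤ ((T.card : ℝ) / (k * c)) ^ (1/θ) * F := by positivity
        have := Real.rpow_le_rpow hb hsh (le_of_lt hθ0)
        rwa [Real.mul_rpow (by positivity) hF0,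
          ← Real.rpow_mul (by positivity), one_div_mul_cancel (ne_of_gt hθ0),
          Real.rpow_one] at this
      have h2 : Ssum ^ (1-θ) * (((T.card : ℝ) / (k * c)) * F ^ θ) ≤ Ssum := by
        calc Ssum ^ (1-θ) * (((T.card : ℝ) / (k * c)) * F ^ θ)
            ≤ Ssum ^ (1-θ) * Ssum ^ θ := by
              apply mul_le_mul_of_nonneg_left h1 (Real.rpow_nonneg hSs0 _)
          _ = Ssum := by
              rw [← Real.rpow_add hSsp, sub_add_cancel, Real.rpow_one]
      have h3 : (F - f S) ^ (1-θ) ≤ Ssum ^ (1-θ) :=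
        Real.rpow_le_rpow (by linarith) hSsF (by linarith)
      
      -- goal: RHS ≤ Ssum / m; rewrite
      rw [le_div_iff₀ hm0]
      have h4 : (1 / (k * c)) * (F - f S) ^ (1 - θ) * F ^ θ * T.card
          = (F - f S) ^ (1-θ) * (((T.card : ℝ) / (k * c)) * F ^ θ) := by ring
      rw [h4]
      calc (F - f S) ^ (1-θ) * (((T.card : ℝ) / (k * c)) * F ^ θ)
          ≤ Ssum ^ (1-θ) * (((T.card : ℝ) / (k * c)) * F ^ θ) := by
            apply mul_le_mul_of_nonneg_right h3 (by positivity)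
        _ ≤ Ssum := h2
  linarith
end

section
/- Let f : 2^V → ℝ≥0 be monotone, submodular, f(∅)=0, and (c,θ)-monotonic sharp with c ≥ 1, θ ∈ (0,1] relative to an optimal S* of max{f(S):|S|≤k}. Then greedy returns S^g with f(S^g) ≥ [1 - (1 - θ/c)^{1/θ}]·f(S*). -/
open Real

/-- Core numeric step: one step of the recursion. -/
lemma greedy_sharp_key {θ K t u : ℝ} (hθ0 : 0 < θ) (hθ1 : θ ≤ 1)
    (hK : 1 ≤ K) (ht : 0 < t) (htu : t ^ θ ≤ u) (hu' : 0 ≤ u - θ / K) :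
    t - t ^ (1 - θ) / K ≤ (u - θ / K) ^ (1 / θ) := by
  have hK0 : 0 < K := lt_of_lt_of_le one_pos hK
  set s : ℝ := t ^ θ with hs_def
  have hs : 0 < s := rpow_pos_of_pos ht θ
  have htpow : t ^ (1 - θ) = t / s := by
    rw [hs_def, Real.rpow_sub ht, Real.rpow_one]
  have hLHS : t - t ^ (1 - θ) / K = t * (1 - 1 / (s * K)) := by
    rw [htpow]; field_simp
  rw [hLHS]
  rcases le_or_gt (s * K) 1 with h1 | h1
  · have : 1 - 1 / (s * K) ≤ 0 := by
      have hsK : 0 < s * K := mul_pos hs hK0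
      have : 1 ≤ 1 / (s * K) := one_le_one_div hsK h1
      linarith
    have h2 : t * (1 - 1 / (s * K)) ≤ 0 := mul_nonpos_of_nonneg_of_nonpos ht.le this
    exact h2.trans (rpow_nonneg hu' _)
  · have hsK : 0 < s * K := mul_pos hs hK0
    have hw : 0 ≤ 1 - 1 / (s * K) := by
      have : 1 / (s * K) ≤ 1 := by
        rw [div_le_one hsK]; exact h1.le
      linarith
    -- Bernoulli: (1 - 1/(sK))^θ ≤ 1 - θ/(sK)
    have hbern : (1 - 1 / (s * K)) ^ θ ≤ 1 - θ * (1 / (s * K)) := by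
      have h := rpow_one_add_le_one_add_mul_self (s := -(1 / (s * K)))
        (by
          have : 1 / (s * K) ≤ 1 := by rw [div_le_one hsK]; exact h1.le
          linarith) hθ0.le hθ1
      simpa [sub_eq_add_neg, mul_neg] using h
    have hstep1 : s * (1 - 1 / (s * K)) ^ θ ≤ s - θ / K := by
      have := mul_le_mul_of_nonneg_left hbern hs.le
      calc s * (1 - 1 / (s * K)) ^ θ ≤ s * (1 - θ * (1 / (s * K))) := this
        _ = s - θ / K := by field_simp
    have hstep2 : s * (1 - 1 / (s * K)) ^ θ ≤ u - θ / K := le_trans hstep1 (by linarith)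
    have hnn : 0 ≤ s * (1 - 1 / (s * K)) ^ θ := mul_nonneg hs.le (rpow_nonneg hw _)
    have hfin := Real.rpow_le_rpow hnn hstep2 (by positivity : (0:ℝ) ≤ 1/θ)
    have heq : (s * (1 - 1 / (s * K)) ^ θ) ^ (1/θ) = t * (1 - 1 / (s * K)) := by
      have e1 : (t ^ θ) ^ (1/θ) = t := by
        rw [← Real.rpow_mul ht.le, mul_one_div, div_self hθ0.ne', Real.rpow_one]
      have e2 : ((1 - 1/(s*K)) ^ θ) ^ (1/θ) = 1 - 1/(s*K) := by
        rw [← Real.rpow_mul hw, mul_one_div, div_self hθ0.ne', Real.rpow_one]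
      rw [Real.mul_rpow hs.le (rpow_nonneg hw _), e2, hs_def, e1]
    rw [heq] at hfin
    exact hfin

/-- The greedy gain `D` dominates `t^(1-θ) F / K`. -/
lemma greedy_gain_bound {θ K F t M D : ℝ} (hθ0 : 0 < θ) (hθ1 : θ ≤ 1)
    (hK : 0 < K) (hF : 0 ≤ F) (ht : 0 < t) (hM : 0 < M)
    (h1 : t * F ≤ M * D) (h2 : (M / K) ^ (1 / θ) * F ≤ M * D) :
    t ^ (1 - θ) * F / K ≤ D := by
  have htθ : 0 < t ^ θ := rpow_pos_of_pos ht θ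
  have htpow : t ^ (1 - θ) = t / t ^ θ := by
    rw [Real.rpow_sub ht, Real.rpow_one]
  rcases le_or_gt M (K * t ^ θ) with hcase | hcase
  · -- D ≥ t F / M ≥ t F/(K t^θ) = t^(1-θ) F/K
    have hD : t * F / M ≤ D := by
      rw [div_le_iff₀ hM]; linarith [h1]
    have : t * F / (K * t ^ θ) ≤ t * F / M :=
      div_le_div_of_nonneg_left (by positivity) hM hcase
    calc t ^ (1 - θ) * F / K = t * F / (K * t ^ θ) := by
          rw [htpow]; field_simp
      _ ≤ t * F / M := this
      _ ≤ D := hD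
  · -- D ≥ (M/K)^(1/θ) F / M ≥ t^(1-θ) F / K
    have hD : (M / K) ^ (1 / θ) * F / M ≤ D := by
      rw [div_le_iff₀ hM]; linarith [h2]
    have hmono : (K * t ^ θ) ^ (1 / θ - 1) ≤ M ^ (1 / θ - 1) := by
      apply Real.rpow_le_rpow (by positivity) hcase.le
      have h1θ : 1 ≤ 1 / θ := (one_le_one_div hθ0 hθ1)
      linarith
    have hL : (K * t ^ θ) ^ (1 / θ - 1) = K ^ (1 / θ - 1) * t ^ (1 - θ) := by
      rw [Real.mul_rpow hK.le htθ.le, ← Real.rpow_mul ht.le]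
      have hexp : θ * (1 / θ - 1) = 1 - θ := by field_simp
      rw [hexp]
    have hR : (M / K) ^ (1 / θ) / M = M ^ (1 / θ - 1) / K ^ (1 / θ) := by
      rw [Real.div_rpow hM.le hK.le, Real.rpow_sub hM, Real.rpow_one]
      field_simp
    have hKsplit : K ^ (1 / θ - 1) / K ^ (1 / θ) = 1 / K := by
      have hexp : 1 / θ - 1 - 1 / θ = -1 := by ring
      rw [← Real.rpow_sub hK, hexp, Real.rpow_neg_one, one_div]
    calc t ^ (1 - θ) * F / K = (K ^ (1 / θ - 1) * t ^ (1 - θ) / K ^ (1 / θ)) * F := by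
          rw [mul_div_assoc, mul_comm (K ^ (1/θ-1)) (t ^ (1-θ)), mul_div_assoc, hKsplit]
          ring
      _ ≤ (M ^ (1 / θ - 1) / K ^ (1 / θ)) * F := by
          have h' : K ^ (1 / θ - 1) * t ^ (1 - θ) ≤ M ^ (1 / θ - 1) := hL ▸ hmono
          gcongr
      _ = (M / K) ^ (1 / θ) * F / M := by rw [← hR]; ring
      _ ≤ D := hD

/-- Submodularity: the marginal values of elements of `T` bound `f (S ∪ T) - f S`. -/
lemma submod_union_le {V : Type*} [DecidableEq V] (f : Finset V → ℝ)
    (hsub : ∀ (A B : Finset V) (e : V), A ⊆ B → e ∉ B →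
      f (insert e B) - f B ≤ f (insert e A) - f A)
    (S : Finset V) :
    ∀ T : Finset V, Disjoint T S →
      f (S ∪ T) ≤ f S + ∑ e ∈ T, (f (insert e S) - f S) := by
  intro T
  induction T using Finset.induction_on with
  | empty => simp
  | @insert a T ha ih =>
    intro hdisj
    have hdT : Disjoint T S := (Finset.disjoint_insert_left.1 hdisj).2
    have haS : a ∉ S := (Finset.disjoint_insert_left.1 hdisj).1
    have haST : a ∉ S ∪ T := by simp [haS, ha]
    have h1 : f (insert a (S ∪ T)) - f (S ∪ T) ≤ f (insert a S) - f S :=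
      hsub S (S ∪ T) a Finset.subset_union_left haST
    have h2 : S ∪ insert a T = insert a (S ∪ T) := by
      ext x; simp [or_comm, or_assoc, or_left_comm]
    rw [h2, Finset.sum_insert ha]
    have := ih hdT
    linarith



/-- Theorem 1: if a monotone submodular nonnegative `f` with `f ∅ = 0` is
`(c,θ)`-monotonic sharp relative to an optimal solution `S*` of `max {f S : |S| ≤ k}`,
then greedy returns `g k` with `f (g k) ≥ (1 - (1 - θ/c)^{1/θ}) f S*`. -/
theorem greedy_monotonic_sharp {V : Type*} [DecidableEq V]
    (f : Finset V → ℝ) (k : ℕ) (hk : 1 ≤ k)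
    (c θ : ℝ) (hc : 1 ≤ c) (hθ0 : 0 < θ) (hθ1 : θ ≤ 1)
    (hnn : ∀ S : Finset V, 0 ≤ f S) (hemp : f ∅ = 0)
    (hmono : ∀ A B : Finset V, A ⊆ B → f A ≤ f B)
    (hsub : ∀ (A B : Finset V) (e : V), A ⊆ B → e ∉ B →
      f (insert e B) - f B ≤ f (insert e A) - f A)
    (Sstar : Finset V) (hSk : Sstar.card ≤ k)
    (hopt : ∀ S : Finset V, S.card ≤ k → f S ≤ f Sstar)
    (hsharp : ∀ S : Finset V, S.card ≤ k →
      ∑ e ∈ Sstar \ S, (f (insert e S) - f S) ≥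
        (((Sstar \ S).card : ℝ) / (k * c)) ^ (1 / θ) * f Sstar)
    (g : ℕ → Finset V) (hg0 : g 0 = ∅)
    (hstep : ∀ i, i < k → ∃ e, e ∉ g i ∧ g (i + 1) = insert e (g i) ∧
      ∀ e', e' ∉ g i → f (insert e' (g i)) - f (g i) ≤ f (insert e (g i)) - f (g i)) :
    f (g k) ≥ (1 - (1 - θ / c) ^ (1 / θ)) * f Sstar := by
  set F := f Sstar with hF_def
  clear_value F
  have hF0 : 0 ≤ F := hF_def ▸ hnn Sstar
  rcases hF0.eq_or_lt with hF | hF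
  · rw [← hF, mul_zero]
    exact hnn _
  have hk0 : (0:ℝ) < (k:ℝ) := by exact_mod_cast hk
  have hK1 : (1:ℝ) ≤ (k:ℝ) * c := by
    calc (1:ℝ) = 1 * 1 := by ring
      _ ≤ (k:ℝ) * c := mul_le_mul (by exact_mod_cast hk) hc zero_le_one hk0.le
  have hK0 : (0:ℝ) < (k:ℝ) * c := lt_of_lt_of_le one_pos hK1
  have hcard : ∀ i, i ≤ k → (g i).card = i := by
    intro i
    induction i with
    | zero => intro _; simp [hg0]
    | succ i ih =>
      intro hik
      obtain ⟨e, he, heq, -⟩ := hstep i (Nat.lt_of_succ_le hik)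
      rw [heq, Finset.card_insert_of_notMem he, ih (Nat.le_of_succ_le hik)]
  have main : ∀ i, i ≤ k →
      (1 - (1 - θ * i / ((k:ℝ) * c)) ^ (1 / θ)) * F ≤ f (g i) := by
    intro i
    induction i with
    | zero =>
      intro _
      simp [hg0, hemp, Real.one_rpow]
    | succ i ih =>
      intro hik
      have hik' : i < k := Nat.lt_of_succ_le hik
      have ihi := ih hik'.le
      obtain ⟨e, he, heq, hmax⟩ := hstep i hik'
      set u : ℝ := 1 - θ * i / ((k:ℝ) * c) with hu_def
      set u' : ℝ := 1 - θ * (↑(i+1) : ℝ) / ((k:ℝ) * c) with hu'_def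
      have huu' : u' = u - θ / ((k:ℝ) * c) := by
        rw [hu'_def, hu_def]
        push_cast
        field_simp
        ring
      clear_value u u'
      have hu'0 : 0 ≤ u' := by
        have h1 : θ * ((i:ℝ)+1) ≤ θ * k := by
          apply mul_le_mul_of_nonneg_left _ hθ0.le
          exact_mod_cast hik
        have h3 : θ / c ≤ 1 := by
          rw [div_le_one (lt_of_lt_of_le one_pos hc)]
          linarith
        have h4 : θ * ((i:ℝ)+1) / ((k:ℝ) * c) ≤ θ * k / ((k:ℝ) * c) := by
          gcongr
        have h2 : θ * k / ((k:ℝ) * c) = θ / c := by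
          rw [mul_comm θ ((k:ℝ)), mul_div_mul_left _ _ hk0.ne']
        rw [hu'_def]
        push_cast
        rw [h2] at h4
        linarith
      have hu0 : 0 ≤ u := by
        have h5 : (0:ℝ) ≤ θ / ((k:ℝ) * c) := by positivity
        have h6 : 0 ≤ u - θ / ((k:ℝ) * c) := huu' ▸ hu'0
        linarith
      have hmonoS : f (g i) ≤ f (g (i+1)) := by
        rw [heq]; exact hmono _ _ (Finset.subset_insert _ _)
      rcases le_or_gt (F - f (g i)) 0 with hΔ | hΔ
      · nlinarith [Real.rpow_nonneg hu'0 (1/θ), hF0, hΔ, hmonoS]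
      · set S : Finset V := g i with hS_def
        set Δ : ℝ := F - f S with hΔ_def
        have hScard : S.card = i := hS_def ▸ hcard i hik'.le
        clear_value S
        have hSle : S.card ≤ k := by omega
        have hm0 : 0 < (Sstar \ S).card := by
          rcases Nat.eq_zero_or_pos (Sstar \ S).card with h | h
          · exfalso
            have hsub' : Sstar ⊆ S := by
              rwa [Finset.card_eq_zero, Finset.sdiff_eq_empty_iff_subset] at h
            have hle : f Sstar ≤ f S := hmono _ _ hsub'
            rw [← hF_def] at hle
            rw [hΔ_def] at hΔ
            linarith
          · exact h
        set M : ℝ := ((Sstar \ S).card : ℝ) with hM_def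
        have hM : 0 < M := by rw [hM_def]; exact_mod_cast hm0
        set D : ℝ := f (g (i+1)) - f S with hD_def
        have hsum_le : ∑ e' ∈ Sstar \ S, (f (insert e' S) - f S) ≤ M * D := by
          have hb : ∀ e' ∈ Sstar \ S, f (insert e' S) - f S ≤ D := by
            intro e' he'
            have he'S : e' ∉ S := (Finset.mem_sdiff.1 he').2
            rw [hD_def, heq]
            exact hmax e' he'S
          calc ∑ e' ∈ Sstar \ S, (f (insert e' S) - f S)
              ≤ ∑ _e' ∈ Sstar \ S, D := Finset.sum_le_sum hb
            _ = M * D := by rw [Finset.sum_const, hM_def, nsmul_eq_mul]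
        clear_value M D
        have hgap : Δ ≤ M * D := by
          have h1 : F ≤ f (S ∪ (Sstar \ S)) := by
            rw [hF_def]
            apply hmono
            intro x hx
            by_cases hxS : x ∈ S
            · exact Finset.mem_union_left _ hxS
            · exact Finset.mem_union_right _ (Finset.mem_sdiff.2 ⟨hx, hxS⟩)
          have h2 := submod_union_le f hsub S (Sstar \ S) Finset.sdiff_disjoint
          rw [hΔ_def]
          linarith
        have hsharp' : (M / ((k:ℝ) * c)) ^ (1/θ) * F ≤ M * D := by
          have hs := hsharp S hSle
          rw [← hM_def] at hs
          linarith
        set t : ℝ := Δ / F with ht_def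
        clear_value Δ t
        have hΔpos : 0 < Δ := by rw [hΔ_def]; linarith
        have ht : 0 < t := ht_def ▸ div_pos hΔpos hF
        have htF : Δ = t * F := by rw [ht_def]; field_simp
        have hgain : t ^ (1 - θ) * F / ((k:ℝ) * c) ≤ D := by
          apply greedy_gain_bound hθ0 hθ1 hK0 hF0 ht hM
          · rw [← htF]; exact hgap
          · exact hsharp'
        have htu : t ^ θ ≤ u := by
          have h' := ihi
          rw [sub_mul, one_mul] at h'
          have hΔu : Δ ≤ u ^ (1/θ) * F := by
            rw [hΔ_def]; linarith
          have htle : t ≤ u ^ (1/θ) := by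
            rw [ht_def, div_le_iff₀ hF]
            linarith
          calc t ^ θ ≤ (u ^ (1/θ)) ^ θ :=
                Real.rpow_le_rpow ht.le htle hθ0.le
            _ = u := by
                rw [← Real.rpow_mul hu0, one_div_mul_cancel hθ0.ne', Real.rpow_one]
        have hkey : t - t ^ (1 - θ) / ((k:ℝ) * c) ≤ (u - θ / ((k:ℝ) * c)) ^ (1/θ) := by
          apply greedy_sharp_key hθ0 hθ1 hK1 ht htu
          rw [← huu']; exact hu'0
        rw [← huu'] at hkey
        have e1 : f (g (i+1)) = F - Δ + D := by rw [hD_def, hΔ_def]; ring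
        rw [e1, htF]
        have h7 : (t - t ^ (1-θ)/((k:ℝ)*c)) * F ≤ u' ^ (1/θ) * F :=
          mul_le_mul_of_nonneg_right hkey hF0
        have h8 : (t - t ^ (1-θ)/((k:ℝ)*c)) * F = t * F - t ^ (1-θ) * F / ((k:ℝ)*c) := by
          ring
        rw [h8] at h7
        have h9 : (1 - u' ^ (1/θ)) * F = F - u' ^ (1/θ) * F := by ring
        rw [h9]
        linarith
  have hfin := main k le_rfl
  have hexp : θ * (k:ℝ) / ((k:ℝ) * c) = θ / c := by
    rw [mul_comm θ ((k:ℝ)), mul_div_mul_left _ _ hk0.ne']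
  rw [hexp] at hfin
  exact hfin
end

section
/- Let w_1 ≥ w_2 ≥ … ≥ w_n > 0 and f(S) = Σ_{i : e_i ∈ S} w_i be a linear set function on ground set V = {e_1,…,e_n}, with k ≤ n. Then S* = {e_1,…,e_k} maximizes f over sets of size at most k, and for each ℓ ∈ [k], the minimum of Σ_{e∈S*\S} f_S(e) over feasible S with |S*\S| = ℓ equals W(ℓ) := Σ_{i=k-ℓ+1}^k w_i. Hence f is (c,θ)-monotonic sharp if and only if c ≥ (ℓ/k)·(W(ℓ)/W(k))^{-θ} for all ℓ ∈ [k-1]. -/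
open Finset

/-- Compare sums separated by a pivot value. -/
private lemma sum_sep_le {n : ℕ} (w : Fin n → ℝ) (A B : Finset (Fin n)) (p : ℝ)
    (hp : 0 ≤ p) (hA : ∀ i ∈ A, w i ≤ p) (hB : ∀ i ∈ B, p ≤ w i)
    (hcard : A.card ≤ B.card) : ∑ i ∈ A, w i ≤ ∑ i ∈ B, w i := by
  calc ∑ i ∈ A, w i ≤ A.card • p := Finset.sum_le_card_nsmul A w p hA
    _ ≤ B.card • p := by
        rw [nsmul_eq_mul, nsmul_eq_mul]
        exact mul_le_mul_of_nonneg_right (Nat.cast_le.mpr hcard) hp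
    _ ≤ ∑ i ∈ B, w i := Finset.card_nsmul_le_sum B w p hB

private lemma sharp_algebra (A B c θ t : ℝ) (hA : 0 < A) (hB : 0 < B)
    (hc : 0 < c) (ht : 0 < t) (hθ : 0 < θ) :
    (t / c) ^ (1 / θ) * B ≤ A ↔ t * (A / B) ^ (-θ) ≤ c := by
  have hr : 0 < A / B := div_pos hA hB
  have htc : 0 < t / c := div_pos ht hc
  have hrθ : 0 < (A / B) ^ θ := Real.rpow_pos_of_pos hr θ
  rw [← le_div_iff₀ hB,
    ← Real.rpow_le_rpow_iff (Real.rpow_nonneg htc.le _) hr.le hθ,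
    ← Real.rpow_mul htc.le, one_div, inv_mul_cancel₀ hθ.ne', Real.rpow_one,
    Real.rpow_neg hr.le, mul_inv_le_iff₀' hrθ, div_le_iff₀ hc]

/-- Proposition 2 (linear functions): with weights `w 0 ≥ w 1 ≥ … ≥ w (n-1) > 0` and
`f S = ∑_{i ∈ S} w i`, the set `S* = {0,…,k-1}` maximizes `f` over sets of size at
most `k`; for each `ℓ ∈ [k]` the minimum of `∑_{e ∈ S*\S} w e` over feasible `S` with
`|S*\S| = ℓ` equals `W ℓ = ∑_{i=k-ℓ}^{k-1} w i`; and `f` is `(c,θ)`-monotonic sharp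
iff `c ≥ (ℓ/k) (W ℓ / W k)^{-θ}` for all `ℓ ∈ [k-1]`. -/
theorem linear_sharpness (n k : ℕ) (hk : 1 ≤ k) (hkn : k ≤ n)
    (w : Fin n → ℝ) (hpos : ∀ i, 0 < w i)
    (hanti : ∀ i j : Fin n, i ≤ j → w j ≤ w i)
    (c θ : ℝ) (hc : 1 ≤ c) (hθ0 : 0 < θ) (hθ1 : θ ≤ 1) :
    letI Sstar : Finset (Fin n) := Finset.univ.filter (fun i => (i : ℕ) < k)
    letI W : ℕ → ℝ := fun ℓ =>
      ∑ i ∈ Finset.univ.filter (fun i : Fin n => k - ℓ ≤ (i : ℕ) ∧ (i : ℕ) < k), w i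
    (∀ S : Finset (Fin n), S.card ≤ k → ∑ i ∈ S, w i ≤ ∑ i ∈ Sstar, w i) ∧
    (∀ ℓ : ℕ, 1 ≤ ℓ → ℓ ≤ k →
      IsLeast {x : ℝ | ∃ S : Finset (Fin n), S.card ≤ k ∧ (Sstar \ S).card = ℓ ∧
        x = ∑ e ∈ Sstar \ S, w e} (W ℓ)) ∧
    ((∀ S : Finset (Fin n), S.card ≤ k →
        ∑ e ∈ Sstar \ S, w e ≥
          (((Sstar \ S).card : ℝ) / (k * c)) ^ (1 / θ) * ∑ i ∈ Sstar, w i) ↔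
      (∀ ℓ : ℕ, 1 ≤ ℓ → ℓ ≤ k - 1 → c ≥ ((ℓ : ℝ) / k) * (W ℓ / W k) ^ (-θ))) := by
  set Sstar : Finset (Fin n) := Finset.univ.filter (fun i => (i : ℕ) < k) with hSdef
  set W : ℕ → ℝ := fun ℓ =>
    ∑ i ∈ Finset.univ.filter (fun i : Fin n => k - ℓ ≤ (i : ℕ) ∧ (i : ℕ) < k), w i
    with hWdef
  have hk1n : k - 1 < n := by omega
  have hkcardaux : ∀ (a b : ℕ), a ≤ k →
      (Finset.univ.filter (fun i : Fin n => a ≤ (i : ℕ) ∧ (i : ℕ) < k)).card = k - a := by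
    intro a b ha
    rw [Finset.card_bij (fun (i : Fin n) _ => (i : ℕ))]
    · exact (Nat.card_Ico a k : (Finset.Ico a k).card = k - a)
    · intro i hi; simp only [Finset.mem_filter] at hi; simp [Finset.mem_Ico, hi.1, hi.2]
    · intro i hi j hj h; exact Fin.ext h
    · intro j hj
      simp only [Finset.mem_Ico] at hj
      exact ⟨⟨j, lt_of_lt_of_le hj.2 hkn⟩, by simp [hj.1, hj.2], rfl⟩
  have hSstar_card : Sstar.card = k := by
    have : Sstar = Finset.univ.filter (fun i : Fin n => 0 ≤ (i : ℕ) ∧ (i : ℕ) < k) := by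
      ext i; simp [hSdef]
    rw [this, hkcardaux 0 0 (Nat.zero_le k)]
    omega
  -- the "bottom ℓ" set
  set Bot : ℕ → Finset (Fin n) := fun ℓ =>
    Finset.univ.filter (fun i : Fin n => k - ℓ ≤ (i : ℕ) ∧ (i : ℕ) < k) with hBot
  have hBotcard : ∀ ℓ, ℓ ≤ k → (Bot ℓ).card = ℓ := by
    intro ℓ hℓ
    rw [hkcardaux (k - ℓ) 0 (Nat.sub_le k ℓ)]
    omega
  -- lower bound: any ℓ-subset of Sstar has sum ≥ W ℓ
  have hlow : ∀ (ℓ : ℕ), 1 ≤ ℓ → ℓ ≤ k → ∀ T : Finset (Fin n), T ⊆ Sstar → T.card = ℓ →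
      W ℓ ≤ ∑ e ∈ T, w e := by
    intro ℓ hℓ1 hℓk T hTs hTc
    have hkl : k - ℓ < n := by omega
    set p : ℝ := w ⟨k - ℓ, hkl⟩ with hpdef
    have hsplitT := Finset.sum_inter_add_sum_sdiff T (Bot ℓ) w
    have hsplitB := Finset.sum_inter_add_sum_sdiff (Bot ℓ) T w
    have hinter : (Bot ℓ) ∩ T = T ∩ (Bot ℓ) := Finset.inter_comm _ _
    have hcardT := Finset.card_inter_add_card_sdiff T (Bot ℓ)
    have hcardB := Finset.card_inter_add_card_sdiff (Bot ℓ) T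
    have hcards : ((Bot ℓ) \ T).card ≤ (T \ (Bot ℓ)).card := by
      rw [hBotcard ℓ hℓk] at hcardB
      rw [hTc] at hcardT
      rw [Finset.inter_comm] at hcardB
      omega
    have hdiff : ∑ i ∈ (Bot ℓ) \ T, w i ≤ ∑ i ∈ T \ (Bot ℓ), w i := by
      apply sum_sep_le w _ _ p (hpos _).le
      · intro i hi
        have hi' : k - ℓ ≤ (i : ℕ) := by
          have := Finset.mem_sdiff.mp hi
          have := Finset.mem_filter.mp this.1
          exact this.2.1
        exact hanti _ i (by rw [Fin.le_def]; exact hi')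
      · intro i hi
        have hmem := Finset.mem_sdiff.mp hi
        have hik : (i : ℕ) < k := (Finset.mem_filter.mp (hTs hmem.1)).2
        have hnb : ¬ (k - ℓ ≤ (i : ℕ) ∧ (i : ℕ) < k) := by
          have := hmem.2
          simp only [hBot, Finset.mem_filter, Finset.mem_univ, true_and] at this
          exact this
        have hlt : (i : ℕ) < k - ℓ := by omega
        exact hanti i _ (by rw [Fin.le_def]; show (i:ℕ) ≤ k - ℓ; omega)
      · exact hcards
    have : W ℓ = ∑ i ∈ (Bot ℓ) ∩ T, w i + ∑ i ∈ (Bot ℓ) \ T, w i := hsplitB.symm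
    rw [this, ← hsplitT, hinter]
    exact add_le_add_right hdiff _
  -- Part 1
  have part1 : ∀ S : Finset (Fin n), S.card ≤ k → ∑ i ∈ S, w i ≤ ∑ i ∈ Sstar, w i := by
    intro S hS
    set p : ℝ := w ⟨k - 1, hk1n⟩ with hpdef
    have hsplitS := Finset.sum_inter_add_sum_sdiff S Sstar w
    have hsplitT := Finset.sum_inter_add_sum_sdiff Sstar S w
    have hcardS := Finset.card_inter_add_card_sdiff S Sstar
    have hcardT := Finset.card_inter_add_card_sdiff Sstar S
    have hcards : (S \ Sstar).card ≤ (Sstar \ S).card := by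
      rw [Finset.inter_comm] at hcardT
      omega
    have hdiff : ∑ i ∈ S \ Sstar, w i ≤ ∑ i ∈ Sstar \ S, w i := by
      apply sum_sep_le w _ _ p (hpos _).le
      · intro i hi
        have hmem := Finset.mem_sdiff.mp hi
        have : ¬ ((i : ℕ) < k) := by
          have := hmem.2
          simp only [Sstar, Finset.mem_filter, Finset.mem_univ, true_and] at this
          exact this
        exact hanti _ i (by rw [Fin.le_def]; show k - 1 ≤ (i:ℕ); omega)
      · intro i hi
        have hmem := Finset.mem_sdiff.mp hi
        have hik : (i : ℕ) < k := (Finset.mem_filter.mp hmem.1).2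
        exact hanti i _ (by rw [Fin.le_def]; show (i:ℕ) ≤ k - 1; omega)
      · exact hcards
    rw [← hsplitS, ← hsplitT, Finset.inter_comm]
    exact add_le_add_right hdiff _
  -- Part 2
  have part2 : ∀ ℓ : ℕ, 1 ≤ ℓ → ℓ ≤ k →
      IsLeast {x : ℝ | ∃ S : Finset (Fin n), S.card ≤ k ∧ (Sstar \ S).card = ℓ ∧
        x = ∑ e ∈ Sstar \ S, w e} (W ℓ) := by
    intro ℓ hℓ1 hℓk
    constructor
    · refine ⟨Finset.univ.filter (fun i : Fin n => (i : ℕ) < k - ℓ), ?_, ?_, ?_⟩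
      · calc (Finset.univ.filter (fun i : Fin n => (i : ℕ) < k - ℓ)).card
            ≤ Sstar.card := Finset.card_le_card (by
              intro i hi
              simp only [hSdef, Finset.mem_filter, Finset.mem_univ, true_and] at hi ⊢
              omega)
          _ = k := hSstar_card
      · have : Sstar \ Finset.univ.filter (fun i : Fin n => (i : ℕ) < k - ℓ) = Bot ℓ := by
          ext i
          simp only [Sstar, hBot, Finset.mem_sdiff, Finset.mem_filter, Finset.mem_univ,
            true_and]
          omega
        rw [this]
        exact hBotcard ℓ hℓk
      · have : Sstar \ Finset.univ.filter (fun i : Fin n => (i : ℕ) < k - ℓ) = Bot ℓ := by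
          ext i
          simp only [Sstar, hBot, Finset.mem_sdiff, Finset.mem_filter, Finset.mem_univ,
            true_and]
          omega
        rw [this]
    · rintro x ⟨S, hS, hScard, rfl⟩
      exact hlow ℓ hℓ1 hℓk (Sstar \ S) (Finset.sdiff_subset) hScard
  refine ⟨part1, part2, ?_⟩
  -- Part 3
  have hOPT : ∑ i ∈ Sstar, w i = W k := by
    apply Finset.sum_congr _ (fun _ _ => rfl)
    ext i
    simp only [Sstar, Finset.mem_filter, Finset.mem_univ, true_and]
    omega
  have hWpos : ∀ ℓ, 1 ≤ ℓ → ℓ ≤ k → 0 < W ℓ := by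
    intro ℓ hℓ1 hℓk
    apply Finset.sum_pos (fun i _ => hpos i)
    refine ⟨⟨k - 1, hk1n⟩, ?_⟩
    simp only [hBot, Finset.mem_filter, Finset.mem_univ, true_and]
    omega
  have hc0 : (0 : ℝ) < c := lt_of_lt_of_le one_pos hc
  have hk0 : (0 : ℝ) < (k : ℝ) := by exact_mod_cast hk
  constructor
  · intro h ℓ hℓ1 hℓk1
    have hℓk : ℓ ≤ k := by omega
    set S₀ : Finset (Fin n) := Finset.univ.filter (fun i : Fin n => (i : ℕ) < k - ℓ)
    have hS₀sub : S₀ ⊆ Sstar := by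
      intro i hi
      simp only [S₀, Sstar, Finset.mem_filter, Finset.mem_univ, true_and] at hi ⊢
      omega
    have hS₀card : S₀.card ≤ k := le_trans (Finset.card_le_card hS₀sub) hSstar_card.le
    have hdiff : Sstar \ S₀ = Bot ℓ := by
      ext i
      simp only [S₀, Sstar, hBot, Finset.mem_sdiff, Finset.mem_filter, Finset.mem_univ,
        true_and]
      omega
    have := h S₀ hS₀card
    rw [hdiff, hBotcard ℓ hℓk, hOPT] at this
    have halg := (sharp_algebra (W ℓ) (W k) c θ ((ℓ : ℝ) / k)
      (hWpos ℓ hℓ1 hℓk) (hWpos k hk le_rfl) hc0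
      (div_pos (by exact_mod_cast hℓ1) hk0) hθ0)
    rw [div_div] at halg
    exact halg.mp this
  · intro h S hS
    rcases Nat.eq_zero_or_pos (Sstar \ S).card with h0 | hℓ1
    · rw [ge_iff_le, Finset.card_eq_zero.mp h0, Finset.sum_empty, Finset.card_empty,
        Nat.cast_zero, zero_div, Real.zero_rpow (show (1:ℝ)/θ ≠ 0 by positivity), zero_mul]
    · set ℓ := (Sstar \ S).card with hℓ
      have hℓk : ℓ ≤ k := by
        rw [hℓ, ← hSstar_card]
        exact Finset.card_le_card Finset.sdiff_subset
      have hsum : W ℓ ≤ ∑ e ∈ Sstar \ S, w e :=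
        hlow ℓ hℓ1 hℓk (Sstar \ S) Finset.sdiff_subset rfl
      have hgoal : ((ℓ : ℝ) / (k * c)) ^ (1 / θ) * ∑ i ∈ Sstar, w i ≤ W ℓ := by
        rw [hOPT]
        rcases eq_or_lt_of_le hℓk with heq | hlt
        · rw [heq]
          have h1 : (k : ℝ) / (k * c) = 1 / c := by
            rw [div_eq_div_iff (by positivity : ((k:ℝ)*c) ≠ 0) hc0.ne']
            ring
          rw [h1]
          have h2 : ((1 : ℝ) / c) ^ (1 / θ) ≤ 1 :=
            Real.rpow_le_one (by positivity)
              ((div_le_one hc0).mpr hc) (by positivity)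
          calc ((1:ℝ)/c) ^ (1/θ) * W k ≤ 1 * W k :=
                mul_le_mul_of_nonneg_right h2 (hWpos k hk le_rfl).le
            _ = W k := one_mul _
        · have halg := (sharp_algebra (W ℓ) (W k) c θ ((ℓ : ℝ) / k)
            (hWpos ℓ hℓ1 hℓk) (hWpos k hk le_rfl) hc0
            (div_pos (by exact_mod_cast hℓ1) hk0) hθ0)
          rw [div_div] at halg
          exact halg.mpr (h ℓ hℓ1 (by omega))
      exact le_trans hgoal hsum
end

section
/- Consider the covering instance on X = {1,…,k}^k with sets A_i = {x : x_i = 1} (i ∈ [k-1]) and B_j = {x : x_k = j} (j ∈ [k]), and coverage function f(S) = |⋃_{U∈S} U|. For ℓ ∈ [k-1] and any S of size k with |S*\S| = ℓ where S* = {B_1,…,B_k}, one has f(S) = k^k − ℓ·k^{k-ℓ-1}(k-1)^ℓ and f(S + B_j) = k^k − (ℓ-1)·k^{k-ℓ-1}(k-1)^ℓ for B_j ∈ S*\S. In particular the marginal value of each B_j ∈ S*\S equals k^{k-ℓ-1}(k-1)^ℓ. -/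
open Finset

lemma cover_card (k : ℕ) (hk : 2 ≤ k)
    (cov : Fin (k - 1) ⊕ Fin k → Finset (Fin k → Fin k))
    (hcovA : ∀ i : Fin (k - 1),
      cov (Sum.inl i) =
        Finset.univ.filter (fun x : Fin k → Fin k =>
          x (Fin.castLE (by omega) i) = (⟨0, by omega⟩ : Fin k)))
    (hcovB : ∀ j : Fin k,
      cov (Sum.inr j) =
        Finset.univ.filter (fun x : Fin k → Fin k => x (⟨k - 1, by omega⟩ : Fin k) = j))
    (S : Finset (Fin (k - 1) ⊕ Fin k)) :
    (S.biUnion cov).card =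
      k ^ k - S.toRightᶜ.card * (k - 1) ^ S.toLeft.card * k ^ (k - 1 - S.toLeft.card) := by
  have hk1 : (1 : ℕ) ≤ k := by omega
  set last : Fin k := ⟨k - 1, by omega⟩ with hlast
  set img : Finset (Fin k) := S.toLeft.image (Fin.castLE (by omega)) with himg
  set T : Fin k → Finset (Fin k) :=
    fun c => if c = last then S.toRightᶜ
      else if c ∈ img then ({(⟨0, by omega⟩ : Fin k)} : Finset (Fin k))ᶜ else univ with hT
  have himg_ne : ∀ c ∈ img, c ≠ last := by
    rintro c hc
    obtain ⟨i, _, rfl⟩ := mem_image.1 hc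
    intro h
    have := congrArg Fin.val h
    simp [hlast] at this
    omega
  have hpi : Fintype.piFinset T = (S.biUnion cov)ᶜ := by
    ext x
    simp only [Fintype.mem_piFinset, Finset.mem_compl, Finset.mem_biUnion, not_exists]
    constructor
    · rintro h (i | j) ⟨hs, hx⟩
      · rw [hcovA] at hx
        simp only [mem_filter, mem_univ, true_and] at hx
        have hc := h (Fin.castLE (by omega) i)
        have hmem : Fin.castLE (by omega : k - 1 ≤ k) i ∈ img :=
          mem_image_of_mem _ (by simpa using hs)
        have hne : Fin.castLE (by omega : k - 1 ≤ k) i ≠ last := himg_ne _ hmem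
        simp only [hT, if_neg hne, if_pos hmem, Finset.mem_compl, mem_singleton] at hc
        exact hc hx
      · rw [hcovB] at hx
        simp only [mem_filter, mem_univ, true_and] at hx
        have hc := h last
        simp only [hT, if_pos rfl, Finset.mem_compl, mem_toRight] at hc
        exact hc (hx ▸ hs)
    · intro h c
      simp only [hT]
      by_cases hc : c = last
      · subst hc
        rw [if_pos rfl]
        simp only [Finset.mem_compl, mem_toRight]
        intro hin
        refine h (Sum.inr (x last)) ⟨hin, ?_⟩
        rw [hcovB]
        simp
      · rw [if_neg hc]
        by_cases hm : c ∈ img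
        · rw [if_pos hm]
          obtain ⟨i, hi, rfl⟩ := mem_image.1 hm
          simp only [Finset.mem_compl, mem_singleton]
          intro h0
          refine h (Sum.inl i) ⟨mem_toLeft.1 hi, ?_⟩
          rw [hcovA]
          simpa using h0
        · rw [if_neg hm]; exact mem_univ _
  have hbU : S.biUnion cov = (Fintype.piFinset T)ᶜ := by rw [hpi, compl_compl]
  have hcardimg : img.card = S.toLeft.card :=
    card_image_of_injective _ (Fin.castLE_injective _)
  have hL : S.toLeft.card ≤ k - 1 := by
    have := Finset.card_le_univ S.toLeft
    simpa using this
  have hprod : ∏ c, (T c).card =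
      S.toRightᶜ.card * ((k - 1) ^ S.toLeft.card * k ^ (k - 1 - S.toLeft.card)) := by
    rw [← Finset.mul_prod_erase univ _ (mem_univ last)]
    have h1 : (T last).card = S.toRightᶜ.card := by simp only [hT, if_pos rfl]
    rw [h1]
    congr 1
    have step : ∀ c ∈ univ.erase last, (T c).card =
        if c ∈ img then k - 1 else k := by
      intro c hc
      have hne : c ≠ last := (mem_erase.1 hc).1
      simp only [hT, if_neg hne]
      split
      · rw [Finset.card_compl]; simp
      · simp
    rw [Finset.prod_congr rfl step, Finset.prod_ite]
    simp only [Finset.prod_const]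
    have hsub : img ⊆ univ.erase last := fun c hc =>
      mem_erase.2 ⟨himg_ne c hc, mem_univ c⟩
    have hf : (univ.erase last).filter (fun c => c ∈ img) = img := by
      rw [Finset.filter_mem_eq_inter, Finset.inter_eq_right.2 hsub]
    have hct : ((univ.erase last).filter (fun c => c ∈ img)).card +
        ((univ.erase last).filter (fun c => ¬ c ∈ img)).card = k - 1 := by
      rw [Finset.card_filter_add_card_filter_not, card_erase_of_mem (mem_univ _)]
      simp
    have hc1 : ((univ.erase last).filter (fun c => c ∈ img)).card = S.toLeft.card := by
      rw [hf, hcardimg]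
    have hc2 : ((univ.erase last).filter (fun c => ¬ c ∈ img)).card =
        k - 1 - S.toLeft.card := by omega
    rw [hc1, hc2]
  rw [hbU, Finset.card_compl, Fintype.card_piFinset, hprod]
  have hcf : Fintype.card (Fin k → Fin k) = k ^ k := by simp
  rw [hcf, mul_assoc]

lemma cast_step (k ℓ a : ℕ) (hk : 2 ≤ k) (hℓ : ℓ ≤ k - 1) (ha : a ≤ ℓ) :
    ((k ^ k - a * (k - 1) ^ ℓ * k ^ (k - 1 - ℓ) : ℕ) : ℤ) =
      (k : ℤ) ^ k - (a : ℤ) * (k : ℤ) ^ (k - ℓ - 1) * ((k : ℤ) - 1) ^ ℓ := by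
  have hb : a * (k - 1) ^ ℓ * k ^ (k - 1 - ℓ) ≤ k ^ k := by
    calc a * (k - 1) ^ ℓ * k ^ (k - 1 - ℓ) ≤ k * k ^ ℓ * k ^ (k - 1 - ℓ) := by
          gcongr <;> omega
      _ = k ^ (1 + ℓ + (k - 1 - ℓ)) := by ring
      _ = k ^ k := by congr 1; omega
  rw [Nat.cast_sub hb]
  have h1 : ((k - 1 : ℕ) : ℤ) = (k : ℤ) - 1 := by
    have h : (1 : ℕ) ≤ k := by omega
    push_cast [h]; ring
  push_cast [h1]
  rw [show k - 1 - ℓ = k - ℓ - 1 from by omega]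
  ring

/-- The Nemhauser–Wolsey coverage instance on `X = {1,…,k}^k` with sets
`A_i = {x : x_i = 1}` (`i ∈ [k-1]`) and `B_j = {x : x_k = j}` (`j ∈ [k]`): for any
`S` of size `k` with `|S* \ S| = ℓ` (`S* = {B_1,…,B_k}`, `ℓ ∈ [k-1]`), the covered
count is `f S = k^k - ℓ k^{k-ℓ-1} (k-1)^ℓ`, and adding any `B_j ∈ S* \ S` gives
`f (S + B_j) = k^k - (ℓ-1) k^{k-ℓ-1} (k-1)^ℓ`; in particular each such marginal value
is `k^{k-ℓ-1} (k-1)^ℓ`. -/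
theorem coverage_instance_values (k : ℕ) (hk : 2 ≤ k) (ℓ : ℕ) (hℓ1 : 1 ≤ ℓ)
    (hℓ : ℓ ≤ k - 1)
    (cov : Fin (k - 1) ⊕ Fin k → Finset (Fin k → Fin k))
    (hcovA : ∀ i : Fin (k - 1),
      cov (Sum.inl i) =
        Finset.univ.filter (fun x : Fin k → Fin k =>
          x (Fin.castLE (by omega) i) = (⟨0, by omega⟩ : Fin k)))
    (hcovB : ∀ j : Fin k,
      cov (Sum.inr j) =
        Finset.univ.filter (fun x : Fin k → Fin k => x (⟨k - 1, by omega⟩ : Fin k) = j))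
    (S : Finset (Fin (k - 1) ⊕ Fin k)) (hS : S.card = k)
    (hdiff : ((Finset.univ.image (Sum.inr : Fin k → Fin (k - 1) ⊕ Fin k)) \ S).card = ℓ) :
    (((S.biUnion cov).card : ℤ) = (k : ℤ) ^ k - ℓ * (k : ℤ) ^ (k - ℓ - 1) * ((k : ℤ) - 1) ^ ℓ) ∧
    (∀ j : Fin k,
      Sum.inr j ∈ (Finset.univ.image (Sum.inr : Fin k → Fin (k - 1) ⊕ Fin k)) \ S →
      (((insert (Sum.inr j) S).biUnion cov).card : ℤ) =
        (k : ℤ) ^ k - ((ℓ : ℤ) - 1) * (k : ℤ) ^ (k - ℓ - 1) * ((k : ℤ) - 1) ^ ℓ) := by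
  have hset : (Finset.univ.image (Sum.inr : Fin k → Fin (k - 1) ⊕ Fin k)) \ S =
      S.toRightᶜ.image Sum.inr := by
    ext x
    cases x <;> simp [Finset.mem_sdiff]
  have hJc : S.toRightᶜ.card = ℓ := by
    rw [hset, card_image_of_injective _ Sum.inr_injective] at hdiff
    exact hdiff
  have hRle : S.toRight.card ≤ k := by
    have := Finset.card_le_univ S.toRight; simpa using this
  have hRcompl : S.toRightᶜ.card = k - S.toRight.card := by
    rw [Finset.card_compl]; simp
  have hRight : S.toRight.card = k - ℓ := by omega
  have hLeft : S.toLeft.card = ℓ := by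
    have h := Finset.card_toLeft_add_card_toRight (u := S)
    omega
  constructor
  · rw [cover_card k hk cov hcovA hcovB S, hJc, hLeft]
    exact cast_step k ℓ ℓ hk hℓ le_rfl
  · intro j hj
    have hjS : Sum.inr j ∉ S := (Finset.mem_sdiff.1 hj).2
    set S' := insert (Sum.inr j) S with hS'
    have htL : S'.toLeft = S.toLeft := by
      ext a; simp [hS', Finset.mem_insert]
    have htR : S'.toRight = insert j S.toRight := by
      ext a; simp [hS', Finset.mem_insert]
    have hjR : j ∉ S.toRight := by simpa using hjS
    have hcard' : S'.toRightᶜ.card = ℓ - 1 := by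
      rw [Finset.card_compl, htR, Finset.card_insert_of_notMem hjR]
      simp only [Fintype.card_fin]
      omega
    rw [cover_card k hk cov hcovA hcovB S', hcard', htL, hLeft,
      cast_step k ℓ (ℓ - 1) hk hℓ (by omega)]
    have : ((ℓ - 1 : ℕ) : ℤ) = (ℓ : ℤ) - 1 := by
      push_cast [hℓ1]; ring
    rw [this]
end

section
/- For every integer k ≥ 1 and every ℓ ∈ [k-1], the inequality (ℓ/k)·((k-1)/k)^ℓ ≥ (ℓ/k)^k holds; consequently the worst-case coverage function of Nemhauser–Wolsey is (1, 1/k)-monotonic sharp. -/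
/-- For every `k` and `ℓ ∈ [k-1]`, `(ℓ/k) ((k-1)/k)^ℓ ≥ (ℓ/k)^k`; this follows from
`((k-1)/k)^ℓ ≥ (ℓ/k)^{k-1}`, and shows the worst-case Nemhauser–Wolsey coverage
function is `(1, 1/k)`-monotonic sharp. -/
theorem coverage_sharp_inequality (k ℓ : ℕ) (hk : 2 ≤ k) (hℓ1 : 1 ≤ ℓ)
    (hℓ : ℓ ≤ k - 1) :
    ((ℓ : ℝ) / k) * (((k : ℝ) - 1) / k) ^ ℓ ≥ ((ℓ : ℝ) / k) ^ k ∧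
    (((k : ℝ) - 1) / k) ^ ℓ ≥ ((ℓ : ℝ) / k) ^ (k - 1) := by
  have hk0 : (0 : ℝ) < k := by positivity
  have hℓk : (ℓ : ℝ) ≤ (k : ℝ) - 1 := by
    have : (ℓ : ℝ) ≤ ((k - 1 : ℕ) : ℝ) := by exact_mod_cast hℓ
    rwa [Nat.cast_sub (by omega), Nat.cast_one] at this
  have h1 : (0 : ℝ) ≤ (ℓ : ℝ) / k := by positivity
  have h2 : ((ℓ : ℝ) / k) ≤ ((k : ℝ) - 1) / k := by
    gcongr
  have h3 : ((k : ℝ) - 1) / k ≤ 1 := by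
    rw [div_le_one hk0]; linarith
  have h4 : (0 : ℝ) ≤ ((k : ℝ) - 1) / k := by
    apply div_nonneg (by linarith) (le_of_lt hk0)
  have key : ((ℓ : ℝ) / k) ^ (k - 1) ≤ (((k : ℝ) - 1) / k) ^ ℓ := by
    calc ((ℓ : ℝ) / k) ^ (k - 1) ≤ (((k : ℝ) - 1) / k) ^ (k - 1) :=
          pow_le_pow_left₀ h1 h2 _
      _ ≤ (((k : ℝ) - 1) / k) ^ ℓ := pow_le_pow_of_le_one h4 h3 hℓ
  refine ⟨?_, key⟩
  have hkeq : k = (k - 1) + 1 := by omega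
  calc ((ℓ : ℝ) / k) ^ k = ((ℓ : ℝ) / k) ^ (k - 1) * ((ℓ : ℝ) / k) := by
        rw [← pow_succ, ← hkeq]
    _ ≤ (((k : ℝ) - 1) / k) ^ ℓ * ((ℓ : ℝ) / k) := by
        apply mul_le_mul_of_nonneg_right key h1
    _ = ((ℓ : ℝ) / k) * (((k : ℝ) - 1) / k) ^ ℓ := by ring
end
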